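/- For every proper Λ-sequence Λ, the space CΛBV_c is separable in the ‖·‖_Λ norm: there exists a countable set D ⊆ CΛBV_c such that for every f ∈ CΛBV_c and every ε > 0 there is g ∈ D with ‖f − g‖_Λ < ε. -/

import Mathlib

set_option maxHeartbeats 1000000


open Filter Set MeasureTheory
open scoped ENNReal Topology

/-- `l` is a Λ-sequence (indexed from 0, so `l 0` plays the role of `λ₁`):
a nondecreasing sequence of positive reals whose reciprocals have divergent sum. -/
def IsLambdaSeq (l : ℕ → ℝ) : Prop :=
  Monotone l ∧ (∀ n, 0 < l n) ∧ ¬ Summable (fun n => 1 / l n)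

/-- A proper Λ-sequence: additionally `λₙ → ∞`. -/
def IsProperLambdaSeq (l : ℕ → ℝ) : Prop :=
  IsLambdaSeq l ∧ Tendsto l atTop atTop

/-- The Λ-variation of `f` computed over partition points taken from `K`:
the supremum of `∑ⱼ |f(x_{j+1}) - f(x_j)| / λ_{β(j)}` over all `m`, all nondecreasing
tuples `x₁ ≤ … ≤ x_{m+1}` of points of `K` and all permutations `β` of the gaps. -/
noncomputable def lamVarOn (l : ℕ → ℝ) (f : ℝ → ℝ) (K : Set ℝ) : ℝ≥0∞ :=
  ⨆ (m : ℕ) (x : Fin (m + 1) → ℝ) (_ : Monotone x) (_ : ∀ j, x j ∈ K)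
    (β : Equiv.Perm (Fin m)),
    ∑ j : Fin m, ENNReal.ofReal (|f (x j.succ) - f (x j.castSucc)| / l (β j))

/-- The Λ-variation of `f : [0,1] → ℝ`. -/
noncomputable def lamVar (l : ℕ → ℝ) (f : ℝ → ℝ) : ℝ≥0∞ :=
  lamVarOn l f (Set.Icc 0 1)

/-- The norm `‖f‖_Λ = V_Λ(f) + |f 0|` (valued in `[0,∞]`). -/
noncomputable def lamNorm (l : ℕ → ℝ) (f : ℝ → ℝ) : ℝ≥0∞ :=
  lamVar l f + ENNReal.ofReal |f 0|

/-- `f` is continuous in Λ-variation: `V_{Λ_(m)}(f) → 0` as `m → ∞`. -/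
def ContInLamVar (l : ℕ → ℝ) (f : ℝ → ℝ) : Prop :=
  Tendsto (fun m => lamVar (fun n => l (n + m)) f) atTop (𝓝 0)

/-- The restricted Λ-variation `V_{Λ,δ}(f)`: the supremum of `∑ⱼ |f(bⱼ) - f(aⱼ)| / λⱼ`
over all finite sequences of nonoverlapping closed subintervals `[aⱼ, bⱼ]` of `[0,1]`
of length at most `δ`, listed in any order. -/
noncomputable def lamVarDelta (l : ℕ → ℝ) (δ : ℝ) (f : ℝ → ℝ) : ℝ≥0∞ :=
  ⨆ (k : ℕ) (a : Fin k → ℝ) (b : Fin k → ℝ)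
    (_ : ∀ j, 0 ≤ a j ∧ a j ≤ b j ∧ b j ≤ 1 ∧ b j - a j ≤ δ)
    (_ : ∀ i j, i ≠ j → b i ≤ a j ∨ b j ≤ a i),
    ∑ j : Fin k, ENNReal.ofReal (|f (b j) - f (a j)| / l j)

/-- The `n`-th Bernstein polynomial of `f : [0,1] → ℝ`. -/
noncomputable def bern (n : ℕ) (f : ℝ → ℝ) (x : ℝ) : ℝ :=
  ∑ k ∈ Finset.range (n + 1),
    f ((k : ℝ) / n) * (n.choose k : ℝ) * x ^ k * (1 - x) ^ (n - k)

/-- The `n`-th Kantorovich polynomial of `f : [0,1] → ℝ`. -/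
noncomputable def kant (n : ℕ) (f : ℝ → ℝ) (x : ℝ) : ℝ :=
  ∑ k ∈ Finset.range (n + 1),
    (n.choose k : ℝ) * x ^ k * (1 - x) ^ (n - k) *
      ((n + 1) * ∫ t in ((k : ℝ) / (n + 1))..(((k : ℝ) + 1) / (n + 1)), f t)

lemma exists_perm_extend {k m : ℕ} (u v : Fin k → Fin m)
    (hu : Function.Injective u) (hv : Function.Injective v) :
    ∃ β : Equiv.Perm (Fin m), ∀ t, β (v t) = u t := by
  classical
  have h1 : Fintype.card {x : Fin m // x ∈ Set.range v} = k :=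
    (Fintype.card_congr (Equiv.ofInjective v hv).symm).trans (Fintype.card_fin k)
  have h2 : Fintype.card {x : Fin m // x ∈ Set.range u} = k :=
    (Fintype.card_congr (Equiv.ofInjective u hu).symm).trans (Fintype.card_fin k)
  have hcard : Fintype.card {x : Fin m // ¬ x ∈ Set.range v}
      = Fintype.card {x : Fin m // ¬ x ∈ Set.range u} := by
    rw [Fintype.card_subtype_compl, Fintype.card_subtype_compl, h1, h2]
  let e : {x : Fin m // x ∈ Set.range v} ≃ {x : Fin m // x ∈ Set.range u} :=
    (Equiv.ofInjective v hv).symm.trans (Equiv.ofInjective u hu)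
  let ec := Fintype.equivOfCardEq hcard
  refine ⟨(Equiv.sumCompl (· ∈ Set.range v)).symm.trans
    ((Equiv.sumCongr e ec).trans (Equiv.sumCompl (· ∈ Set.range u))), fun t => ?_⟩
  have hmem : v t ∈ Set.range v := ⟨t, rfl⟩
  simp only [Equiv.trans_apply]
  rw [Equiv.sumCompl_symm_apply_of_pos hmem]
  simp only [Equiv.sumCongr_apply, Sum.map_inl, Equiv.sumCompl_apply_inl]
  show ((e ⟨v t, hmem⟩ : {x : Fin m // x ∈ Set.range u}) : Fin m) = u t
  simp only [e, Equiv.trans_apply]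
  rw [show (⟨v t, hmem⟩ : {x : Fin m // x ∈ Set.range v}) = ⟨v t, ⟨t, rfl⟩⟩ from rfl,
    Equiv.ofInjective_symm_apply]
  rfl

lemma lemA_sorted (l : ℕ → ℝ) (h : ℝ → ℝ) {K : ℕ} (A B : Fin (K+1) → ℝ) (W : Fin (K+1) → ℕ)
    (hW : Function.Injective W)
    (h0 : ∀ t, 0 ≤ A t) (hAB : ∀ t, A t ≤ B t) (h2 : ∀ t, B t ≤ 1)
    (hchain : ∀ (n : ℕ) (hn : n + 1 < K + 1), B ⟨n, by omega⟩ ≤ A ⟨n+1, hn⟩) :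
    ∑ t, ENNReal.ofReal (|h (B t) - h (A t)| / l (W t)) ≤ lamVar l h := by
  classical
  set P : ℕ := (Finset.univ.sup W) + 1 with hP
  set m : ℕ := 2*(K+1) + P with hm
  set y : ℕ → ℝ := fun n =>
    if hn : n < 2*(K+1) then
      (if n % 2 = 0 then A ⟨n/2, by omega⟩ else B ⟨n/2, by omega⟩)
    else B ⟨K, by omega⟩ with hy
  have hyA : ∀ t : Fin (K+1), y (2*t.val) = A t := by
    intro t
    have ht : 2*t.val < 2*(K+1) := by have := t.isLt; omega
    simp only [hy, dif_pos ht, if_pos (by omega : (2*t.val) % 2 = 0)]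
    congr 1; exact Fin.ext (show 2*t.val/2 = t.val by omega)
  have hyB : ∀ t : Fin (K+1), y (2*t.val+1) = B t := by
    intro t
    have ht : 2*t.val+1 < 2*(K+1) := by have := t.isLt; omega
    simp only [hy, dif_pos ht, if_neg (by omega : ¬ (2*t.val+1) % 2 = 0)]
    congr 1; exact Fin.ext (show (2*t.val+1)/2 = t.val by omega)
  have hstep : ∀ n, y n ≤ y (n+1) := by
    intro n
    by_cases h1 : n + 1 < 2*(K+1)
    · have hn : n < 2*(K+1) := by omega
      by_cases he : n % 2 = 0
      · have e1 : (n+1) % 2 ≠ 0 := by omega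
        have e2 : (n+1)/2 = n/2 := by omega
        simp only [hy, dif_pos hn, dif_pos h1, if_pos he, if_neg e1]
        have : (⟨(n+1)/2, by omega⟩ : Fin (K+1)) = ⟨n/2, by omega⟩ := Fin.ext (show (n+1)/2 = n/2 from by omega)
        rw [this]; exact hAB _
      · have e1 : (n+1) % 2 = 0 := by omega
        have e2 : (n+1)/2 = n/2 + 1 := by omega
        have e3 : n/2 + 1 < K + 1 := by omega
        simp only [hy, dif_pos hn, dif_pos h1, if_neg he, if_pos e1]
        have : (⟨(n+1)/2, by omega⟩ : Fin (K+1)) = ⟨n/2+1, e3⟩ := Fin.ext (show (n+1)/2 = n/2+1 from by omega)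
        rw [this]; exact hchain (n/2) e3
    · by_cases hn : n < 2*(K+1)
      · have h3 : n = 2*K+1 := by omega
        have he : ¬ n % 2 = 0 := by omega
        simp only [hy, dif_pos hn, dif_neg (by omega : ¬ (n+1) < 2*(K+1)), if_neg he]
        have : (⟨n/2, by omega⟩ : Fin (K+1)) = ⟨K, by omega⟩ := Fin.ext (show n/2 = K from by omega)
        rw [this]
      · simp only [hy, dif_neg hn, dif_neg (by omega : ¬ (n+1) < 2*(K+1))]
        exact le_rfl
  have hymono : Monotone y := monotone_nat_of_le_succ hstep
  set x : Fin (m+1) → ℝ := fun j => y j.val with hx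
  have hxmono : Monotone x := by
    intro i j hij
    exact hymono hij
  have hy01 : ∀ n, y n ∈ Set.Icc (0:ℝ) 1 := by
    intro n
    simp only [hy]
    split_ifs with h1 h2'
    · exact ⟨h0 _, le_trans (hAB _) (h2 _)⟩
    · exact ⟨le_trans (h0 _) (hAB _), h2 _⟩
    · exact ⟨le_trans (h0 _) (hAB _), h2 _⟩
  have hxmem : ∀ j, x j ∈ Set.Icc (0:ℝ) 1 := fun j => hy01 _
  have hWlt : ∀ t, W t < m := by
    intro t
    have := Finset.le_sup (f := W) (Finset.mem_univ t)
    omega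
  set u : Fin (K+1) → Fin m := fun t => ⟨W t, hWlt t⟩ with hu
  set v : Fin (K+1) → Fin m := fun t => ⟨2*t.val, by have := t.isLt; omega⟩ with hv
  have huinj : Function.Injective u := by
    intro a b hab
    exact hW (by simpa [hu, Fin.mk.injEq] using hab)
  have hvinj : Function.Injective v := by
    intro a b hab
    simp only [hv, Fin.mk.injEq] at hab
    exact Fin.ext (by omega)
  obtain ⟨β, hβ⟩ := exists_perm_extend u v huinj hvinj
  set F : Fin m → ℝ≥0∞ := fun j =>
    ENNReal.ofReal (|h (x j.succ) - h (x j.castSucc)| / l (β j)) with hF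
  have hterm : ∀ t : Fin (K+1), F (v t) = ENNReal.ofReal (|h (B t) - h (A t)| / l (W t)) := by
    intro t
    have e1 : x (v t).castSucc = A t := by
      show y ((v t).castSucc.val) = A t
      rw [Fin.coe_castSucc]; exact hyA t
    have e2 : x (v t).succ = B t := by
      show y ((v t).succ.val) = B t
      rw [Fin.val_succ]; exact hyB t
    have e3 : (β (v t) : ℕ) = W t := by rw [hβ]
    rw [hF]; simp only; rw [e1, e2, e3]
  calc ∑ t, ENNReal.ofReal (|h (B t) - h (A t)| / l (W t))
      = ∑ t, F (v t) := by
        refine Finset.sum_congr rfl fun t _ => ?_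
        exact (hterm t).symm
    _ = ∑ j ∈ Finset.univ.image v, F j := by
        rw [Finset.sum_image (fun a _ b _ hab => hvinj hab)]
    _ ≤ ∑ j : Fin m, F j := Finset.sum_le_sum_of_subset (Finset.subset_univ _)
    _ ≤ lamVar l h := by
        exact le_iSup_of_le m (le_iSup_of_le x (le_iSup_of_le hxmono
          (le_iSup_of_le hxmem (le_iSup_of_le β le_rfl))))

lemma lemA_fin (l : ℕ → ℝ) (h : ℝ → ℝ) {K : ℕ} (aa bb : Fin K → ℝ) (w : Fin K → ℕ)
    (hw : Function.Injective w)
    (h0 : ∀ i, 0 ≤ aa i) (h1 : ∀ i, aa i ≤ bb i) (h2 : ∀ i, bb i ≤ 1)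
    (hno : ∀ i j, i ≠ j → bb i ≤ aa j ∨ bb j ≤ aa i) :
    ∑ i, ENNReal.ofReal (|h (bb i) - h (aa i)| / l (w i)) ≤ lamVar l h := by
  classical
  set G : Fin K → ℝ≥0∞ := fun i => ENNReal.ofReal (|h (bb i) - h (aa i)| / l (w i)) with hG
  set s : Finset (Fin K) := Finset.univ.filter (fun i => aa i < bb i) with hs
  have hsplit : ∑ i, G i = ∑ i ∈ s, G i := by
    rw [← Finset.sum_filter_add_sum_filter_not Finset.univ (fun i => aa i < bb i) G]
    have hz : ∑ i ∈ Finset.univ.filter (fun i => ¬ aa i < bb i), G i = 0 := by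
      refine Finset.sum_eq_zero fun i hi => ?_
      have : bb i = aa i :=
        le_antisymm (not_lt.1 (Finset.mem_filter.1 hi).2) (h1 i)
      rw [hG]; simp only
      rw [this, sub_self, abs_zero, zero_div, ENNReal.ofReal_zero]
    rw [hz, add_zero]
  rw [hsplit]
  rcases Nat.eq_zero_or_pos s.card with hc0 | hpos
  · rw [Finset.card_eq_zero.1 hc0]; simp
  obtain ⟨K', hK'⟩ : ∃ K', s.card = K' + 1 := ⟨s.card - 1, by omega⟩
  set e := s.orderIsoOfFin hK' with he
  have hmem : ∀ t : Fin (K'+1), ((e t : {x // x ∈ s}) : Fin K) ∈ s := fun t => (e t).2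
  have hlt : ∀ t : Fin (K'+1), aa ((e t : {x // x ∈ s}) : Fin K) < bb ((e t : {x // x ∈ s}) : Fin K) := by
    intro t
    exact (Finset.mem_filter.1 (hmem t)).2
  have heinj : Function.Injective (fun t : Fin (K'+1) => ((e t : {x // x ∈ s}) : Fin K)) := by
    intro a b hab
    exact e.injective (Subtype.coe_injective hab)
  set A0 : Fin (K'+1) → ℝ := fun t => aa ((e t : {x // x ∈ s}) : Fin K) with hA0
  set B0 : Fin (K'+1) → ℝ := fun t => bb ((e t : {x // x ∈ s}) : Fin K) with hB0
  set W0 : Fin (K'+1) → ℕ := fun t => w ((e t : {x // x ∈ s}) : Fin K) with hW0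
  set σ := Tuple.sort A0 with hσ
  have hsmono : Monotone (A0 ∘ σ) := Tuple.monotone_sort A0
  have hchain : ∀ (n : ℕ) (hn : n + 1 < K' + 1),
      (B0 ∘ σ) ⟨n, by omega⟩ ≤ (A0 ∘ σ) ⟨n+1, hn⟩ := by
    intro n hn
    have hne : σ ⟨n, by omega⟩ ≠ σ ⟨n+1, hn⟩ := by
      intro hc
      have := σ.injective hc
      simp only [Fin.mk.injEq] at this
      omega
    set i := ((e (σ ⟨n, by omega⟩) : {x // x ∈ s}) : Fin K)
    set j := ((e (σ ⟨n+1, hn⟩) : {x // x ∈ s}) : Fin K)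
    have hij : i ≠ j := fun hc => hne (heinj hc)
    rcases hno i j hij with hcase | hcase
    · exact hcase
    · exfalso
      have hmon : A0 (σ ⟨n, by omega⟩) ≤ A0 (σ ⟨n+1, hn⟩) :=
        hsmono (Fin.mk_le_mk.2 (by omega) : (⟨n, by omega⟩ : Fin (K'+1)) ≤ ⟨n+1, hn⟩)
      have := hlt (σ ⟨n+1, hn⟩)
      have h5 : aa j < bb j := this
      have h6 : bb j ≤ aa i := hcase
      have h7 : aa i ≤ aa j := hmon
      linarith
  have hsum1 : ∑ i ∈ s, G i = ∑ t : Fin (K'+1), G ((e t : {x // x ∈ s}) : Fin K) := by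
    rw [← Finset.sum_coe_sort s G]
    exact (Equiv.sum_comp e.toEquiv (fun i : {x // x ∈ s} => G i)).symm
  have hsum2 : ∑ t : Fin (K'+1), G ((e t : {x // x ∈ s}) : Fin K)
      = ∑ t : Fin (K'+1), G ((e (σ t) : {x // x ∈ s}) : Fin K) :=
    (Equiv.sum_comp σ (fun t => G ((e t : {x // x ∈ s}) : Fin K))).symm
  rw [hsum1, hsum2]
  exact lemA_sorted l h (A0 ∘ σ) (B0 ∘ σ) (W0 ∘ σ)
    (fun a b hab => σ.injective (heinj (hw hab)))
    (fun t => h0 _) (fun t => le_of_lt (hlt _)) (fun t => h2 _) hchain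


lemma lemA (l : ℕ → ℝ) (h : ℝ → ℝ) {ι : Type} [Fintype ι] (aa bb : ι → ℝ) (w : ι → ℕ)
    (hw : Function.Injective w)
    (hbd : ∀ i, 0 ≤ aa i ∧ aa i ≤ bb i ∧ bb i ≤ 1)
    (hno : ∀ i j, i ≠ j → bb i ≤ aa j ∨ bb j ≤ aa i) :
    ∑ i, ENNReal.ofReal (|h (bb i) - h (aa i)| / l (w i)) ≤ lamVar l h := by
  classical
  let e := (Fintype.equivFin ι).symm
  rw [← Equiv.sum_comp e (fun i => ENNReal.ofReal (|h (bb i) - h (aa i)| / l (w i)))]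
  exact lemA_fin l h (aa ∘ e) (bb ∘ e) (w ∘ e) (hw.comp e.injective)
    (fun i => (hbd _).1) (fun i => (hbd _).2.1) (fun i => (hbd _).2.2)
    (fun i j hij => hno _ _ (fun hc => hij (e.injective hc)))

noncomputable def pwl (N : ℕ) (v : ℕ → ℝ) (x : ℝ) : ℝ :=
  ∑ i ∈ Finset.range (N+1), v i * max 0 (1 - |N * x - i|)


lemma pwl_continuous (N : ℕ) (v : ℕ → ℝ) : Continuous (pwl N v) := by
  unfold pwl
  refine continuous_finset_sum _ fun i _ => ?_
  exact continuous_const.mul ((continuous_const.max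
    (continuous_const.sub (((continuous_const.mul continuous_id).sub continuous_const).abs))))


lemma pwl_affine (N : ℕ) (v : ℕ → ℝ) (i : ℕ) (hi : i + 1 ≤ N) (x : ℝ)
    (hx1 : (i:ℝ) ≤ N*x) (hx2 : N*x ≤ i+1) :
    pwl N v x = v i + (N*x - i) * (v (i+1) - v i) := by
  unfold pwl
  have hz : ∀ j ∈ Finset.range (N+1), j ≠ i ∧ j ≠ i + 1 →
      v j * max 0 (1 - |N * x - j|) = 0 := by
    intro j _ hj12
    obtain ⟨hj1, hj2⟩ := hj12
    have : (1 : ℝ) ≤ |N * x - j| := by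
      rcases lt_or_gt_of_ne hj1 with hj | hj
      · -- j < i
        have : (j:ℝ) ≤ i - 1 := by
          have : j + 1 ≤ i := hj
          have := (Nat.cast_le (α := ℝ)).2 this
          push_cast at this ⊢; linarith
        have h1 : (1:ℝ) ≤ N*x - j := by linarith
        calc (1:ℝ) ≤ N*x - j := h1
          _ ≤ |N * x - j| := le_abs_self _
      · -- j > i, j ≠ i+1 so j ≥ i+2
        have hj' : i + 2 ≤ j := by omega
        have : ((i:ℝ) + 2) ≤ j := by
          have := (Nat.cast_le (α := ℝ)).2 hj'
          push_cast at this ⊢; linarith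
        have h1 : (1:ℝ) ≤ (j:ℝ) - N*x := by linarith
        calc (1:ℝ) ≤ (j:ℝ) - N*x := h1
          _ ≤ |N * x - j| := by rw [abs_sub_comm]; exact le_abs_self _
    have hle : 1 - |N * x - j| ≤ 0 := by linarith
    rw [max_eq_left hle, mul_zero]
  rw [Finset.sum_eq_add_of_mem i (i+1) (by simp; omega) (by simp; omega) (by omega) hz]
  have e1 : |N * x - i| = N*x - i := abs_of_nonneg (by linarith)
  have e2 : |N * x - (i+1:ℕ)| = (i+1) - N*x := by
    push_cast
    rw [abs_sub_comm]
    exact abs_of_nonneg (by linarith)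
  rw [e1, e2]
  have e3 : max 0 (1 - (N*x - i)) = 1 - (N*x - i) := max_eq_right (by linarith)
  have e4 : max 0 (1 - ((i:ℝ)+1 - N*x)) = 1 - ((i:ℝ)+1 - N*x) := max_eq_right (by linarith)
  rw [e3]
  push_cast
  rw [e4]
  ring


lemma pwl_lip (N : ℕ) (v : ℕ → ℝ) (x y : ℝ) :
    |pwl N v x - pwl N v y| ≤ ((N:ℝ) * ∑ i ∈ Finset.range (N+1), |v i|) * |x - y| := by
  unfold pwl
  rw [← Finset.sum_sub_distrib]
  calc |∑ i ∈ Finset.range (N+1), (v i * max 0 (1 - |N * x - i|) - v i * max 0 (1 - |N * y - i|))|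
      ≤ ∑ i ∈ Finset.range (N+1), |v i * max 0 (1 - |N * x - i|) - v i * max 0 (1 - |N * y - i|)| :=
        Finset.abs_sum_le_sum_abs _ _
    _ ≤ ∑ i ∈ Finset.range (N+1), |v i| * ((N:ℝ) * |x - y|) := by
        refine Finset.sum_le_sum fun i _ => ?_
        rw [← mul_sub, abs_mul]
        refine mul_le_mul_of_nonneg_left ?_ (abs_nonneg _)
        have h1 : |max 0 (1 - |N * x - i|) - max 0 (1 - |N * y - i|)|
            ≤ |(1 - |N * x - i|) - (1 - |N * y - i|)| := by
          rw [max_comm 0 _, max_comm 0 (1 - |N * y - i|)]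
          exact abs_max_sub_max_le_abs _ _ _
        refine h1.trans ?_
        rw [show (1 - |(N:ℝ) * x - i|) - (1 - |(N:ℝ) * y - i|)
          = |(N:ℝ) * y - i| - |(N:ℝ) * x - i| from by ring]
        refine (abs_abs_sub_abs_le_abs_sub _ _).trans ?_
        have : (N:ℝ) * y - i - (N * x - i) = N * (y - x) := by ring
        rw [this, abs_mul, abs_sub_comm x y]
        rw [abs_of_nonneg (show (0:ℝ) ≤ (N:ℝ) from Nat.cast_nonneg N)]
    _ = (∑ i ∈ Finset.range (N+1), |v i|) * ((N:ℝ) * |x - y|) := by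
        rw [← Finset.sum_mul]
    _ = ((N:ℝ) * ∑ i ∈ Finset.range (N+1), |v i|) * |x - y| := by ring


noncomputable def pc (N : ℕ) (y : ℝ) : ℕ := min (Int.toNat ⌊y * N⌋) (N - 1)


lemma pc_le (N : ℕ) (y : ℝ) : pc N y ≤ N - 1 := min_le_right _ _


lemma pc_mono (N : ℕ) {y y' : ℝ} (hyy' : y ≤ y') : pc N y ≤ pc N y' := by
  unfold pc
  exact min_le_min (Int.toNat_le_toNat (Int.floor_le_floor
    (mul_le_mul_of_nonneg_right hyy' (Nat.cast_nonneg N)))) le_rfl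


lemma pc_left (N : ℕ) {y : ℝ} (hy : 0 ≤ y) : (pc N y : ℝ) ≤ y * N := by
  have h1 : (pc N y : ℕ) ≤ Int.toNat ⌊y * N⌋ := min_le_left _ _
  have h2 : ((Int.toNat ⌊y * N⌋ : ℕ) : ℝ) = ((⌊y * N⌋ : ℤ) : ℝ) := by
    congr 1
    exact_mod_cast Int.toNat_of_nonneg (Int.floor_nonneg.2 (by positivity))
  calc (pc N y : ℝ) ≤ ((Int.toNat ⌊y * N⌋ : ℕ) : ℝ) := by exact_mod_cast h1
    _ = ((⌊y * N⌋ : ℤ) : ℝ) := h2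
    _ ≤ y * N := Int.floor_le _
  

lemma pc_right (N : ℕ) (hN : 1 ≤ N) {y : ℝ} (hy : 0 ≤ y) (hy1 : y ≤ 1) :
    y * N ≤ (pc N y : ℝ) + 1 := by
  unfold pc
  rcases le_or_gt (Int.toNat ⌊y * N⌋) (N - 1) with hc | hc
  · rw [min_eq_left hc]
    have h2 : ((Int.toNat ⌊y * N⌋ : ℕ) : ℝ) = ((⌊y * N⌋ : ℤ) : ℝ) := by
      congr 1
      exact_mod_cast Int.toNat_of_nonneg (Int.floor_nonneg.2 (by positivity))
    rw [h2]
    have := Int.lt_floor_add_one (y * N)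
    linarith
  · rw [min_eq_right (le_of_lt hc)]
    have : y * N ≤ N := by nlinarith [Nat.cast_nonneg (α := ℝ) N]
    have hcast : ((N - 1 : ℕ) : ℝ) + 1 = N := by
      have : (1:ℕ) ≤ N := hN
      push_cast [Nat.cast_sub this]
      ring
    rw [hcast]
    assumption


lemma pwl_eq_affine (N : ℕ) (hN : 1 ≤ N) (v : ℕ → ℝ) {y : ℝ} (hy : 0 ≤ y) (hy1 : y ≤ 1) :
    pwl N v y = v (pc N y) + (N*y - pc N y) * (v (pc N y + 1) - v (pc N y)) := by
  refine pwl_affine N v (pc N y) (by have := pc_le N y; omega) y ?_ ?_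
  · rw [mul_comm]; exact pc_left N hy
  · rw [mul_comm]
    have := pc_right N hN hy hy1
    push_cast
    linarith

noncomputable def clampX {m : ℕ} (x : Fin (m+1) → ℝ) : ℕ → ℝ := fun n => x ⟨min n m, by omega⟩


lemma clampX_mono {m : ℕ} {x : Fin (m+1) → ℝ} (hx : Monotone x) : Monotone (clampX x) :=
  fun a b hab => hx (by simp only [Fin.mk_le_mk]; omega)


lemma clampX_castSucc {m : ℕ} (x : Fin (m+1) → ℝ) (j : Fin m) :
    clampX x j.val = x j.castSucc := by
  have hj := j.isLt
  unfold clampX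
  congr 1
  exact Fin.ext (show min j.val m = j.castSucc.val by rw [Fin.coe_castSucc]; omega)


lemma clampX_succ {m : ℕ} (x : Fin (m+1) → ℝ) (j : Fin m) :
    clampX x (j.val + 1) = x j.succ := by
  have hj := j.isLt
  unfold clampX
  congr 1
  exact Fin.ext (show min (j.val + 1) m = j.succ.val by rw [Fin.val_succ]; omega)


lemma sum_gap_le {m : ℕ} {x : Fin (m+1) → ℝ} (hx : Monotone x) (S : Finset (Fin m))
    (hS : S.Nonempty) {A B : ℝ}
    (hA : ∀ j ∈ S, A ≤ x j.castSucc) (hB : ∀ j ∈ S, x j.succ ≤ B) :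
    ∑ j ∈ S, (x j.succ - x j.castSucc) ≤ B - A := by
  classical
  have hXm : Monotone (clampX x) := clampX_mono hx
  set jmin := S.min' hS with hjmin
  set jmax := S.max' hS with hjmax
  have h1 : ∑ j ∈ S, (x j.succ - x j.castSucc)
      = ∑ n ∈ S.image (Fin.val), (clampX x (n+1) - clampX x n) := by
    rw [Finset.sum_image (by exact fun a _ b _ hab => Fin.ext hab)]
    refine Finset.sum_congr rfl fun j _ => ?_
    rw [clampX_succ, clampX_castSucc]
  rw [h1]
  have hsub : S.image (Fin.val) ⊆ Finset.Ico (jmin.val) (jmax.val + 1) := by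
    intro n hn
    obtain ⟨j, hj, rfl⟩ := Finset.mem_image.1 hn
    rw [Finset.mem_Ico]
    refine ⟨S.min'_le j hj, ?_⟩
    have := S.le_max' j hj
    omega
  have h2 : ∑ n ∈ S.image (Fin.val), (clampX x (n+1) - clampX x n)
      ≤ ∑ n ∈ Finset.Ico (jmin.val) (jmax.val + 1), (clampX x (n+1) - clampX x n) := by
    refine Finset.sum_le_sum_of_subset_of_nonneg hsub fun n _ _ => ?_
    have : clampX x n ≤ clampX x (n+1) := hXm (by omega)
    linarith
  refine h2.trans ?_
  have h3 : ∑ n ∈ Finset.Ico (jmin.val) (jmax.val + 1), (clampX x (n+1) - clampX x n)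
      = clampX x (jmax.val + 1) - clampX x jmin.val := by
    rw [Finset.sum_Ico_eq_sub _ (by have := S.le_max' jmin (S.min'_mem hS); omega)]
    rw [Finset.sum_range_sub, Finset.sum_range_sub]
    ring
  rw [h3]
  have h4 : A ≤ clampX x jmin.val := by
    rw [clampX_castSucc]
    exact hA jmin (S.min'_mem hS)
  have h5 : clampX x (jmax.val + 1) ≤ B := by
    rw [clampX_succ]
    exact hB jmax (S.max'_mem hS)
  linarith


lemma sum_gap_total {m : ℕ} {x : Fin (m+1) → ℝ} (hx : Monotone x)
    (hK : ∀ j, x j ∈ Set.Icc (0:ℝ) 1) :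
    ∑ j : Fin m, (x j.succ - x j.castSucc) ≤ 1 := by
  have h1 : ∑ j : Fin m, (x j.succ - x j.castSucc)
      = ∑ n ∈ Finset.range m, (clampX x (n+1) - clampX x n) := by
    rw [← Fin.sum_univ_eq_sum_range (fun n => clampX x (n+1) - clampX x n) m]
    refine Finset.sum_congr rfl fun j _ => ?_
    rw [clampX_succ, clampX_castSucc]
  rw [h1, Finset.sum_range_sub]
  have h2 := (hK ⟨min m m, by omega⟩).2
  have h3 := (hK ⟨min 0 m, by omega⟩).1
  unfold clampX
  linarith


lemma lamVar_lip {l : ℕ → ℝ} (hm : Monotone l) (hp : ∀ n, 0 < l n) {g : ℝ → ℝ} {K : ℝ}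
    (hK : 0 ≤ K) (hg : ∀ x y, |g x - g y| ≤ K * |x - y|) :
    lamVar l g ≤ ENNReal.ofReal (K / l 0) := by
  refine iSup_le fun m => iSup_le fun x => iSup_le fun hx => iSup_le fun hmem =>
    iSup_le fun β => ?_
  calc ∑ j : Fin m, ENNReal.ofReal (|g (x j.succ) - g (x j.castSucc)| / l (β j))
      ≤ ∑ j : Fin m, ENNReal.ofReal (K * (x j.succ - x j.castSucc) / l 0) := by
        refine Finset.sum_le_sum fun j _ => ?_
        refine ENNReal.ofReal_le_ofReal ?_
        have h2 : x j.castSucc ≤ x j.succ := hx (Fin.castSucc_le_succ j)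
        have h1 := hg (x j.succ) (x j.castSucc)
        rw [abs_of_nonneg (show (0:ℝ) ≤ x j.succ - x j.castSucc by linarith)] at h1
        exact div_le_div₀ (mul_nonneg hK (by linarith)) h1 (hp _) (hm (Nat.zero_le _))
    _ = ENNReal.ofReal (∑ j : Fin m, K * (x j.succ - x j.castSucc) / l 0) := by
        rw [ENNReal.ofReal_sum_of_nonneg]
        intro j _
        have h2 : x j.castSucc ≤ x j.succ := hx (Fin.castSucc_le_succ j)
        exact div_nonneg (mul_nonneg hK (by linarith)) (le_of_lt (hp 0))
    _ ≤ ENNReal.ofReal (K / l 0) := by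
        refine ENNReal.ofReal_le_ofReal ?_
        have h3 : ∑ j : Fin m, K * (x j.succ - x j.castSucc) / l 0
            = K * (∑ j : Fin m, (x j.succ - x j.castSucc)) / l 0 := by
          rw [← Finset.sum_div, ← Finset.mul_sum]
        rw [h3]
        have h4 := sum_gap_total hx hmem
        have h5 := hp 0
        have h6 : K * ∑ j : Fin m, (x j.succ - x j.castSucc) ≤ K * 1 :=
          mul_le_mul_of_nonneg_left h4 hK
        exact div_le_div₀ hK (by linarith) h5 le_rfl


lemma helperC {l : ℕ → ℝ} (hm : Monotone l) (hp : ∀ n, 0 < l n) (f : ℝ → ℝ) (v : ℕ → ℝ)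
    {N : ℕ} (hN : 1 ≤ N) {η : ℝ} (hη : 0 ≤ η) (hv : ∀ i, i ≤ N → |v i - f (i / N)| ≤ η)
    {ι : Type} [Fintype ι] (c d : ι → ℕ) (hcd : ∀ i, c i ≤ d i) (hdN : ∀ i, d i ≤ N)
    (w : ι → ℕ) (hw : Function.Injective w)
    (hno : ∀ i j, i ≠ j → d i ≤ c j ∨ d j ≤ c i) :
    ∑ i, ENNReal.ofReal (|v (d i) - v (c i)| / l (w i))
      ≤ lamVar l f + (Fintype.card ι : ℝ≥0∞) * ENNReal.ofReal (2 * η / l 0) := by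
  classical
  have hN0 : (0:ℝ) < (N:ℝ) := by exact_mod_cast hN
  have key : ∀ i : ι, ENNReal.ofReal (|v (d i) - v (c i)| / l (w i))
      ≤ ENNReal.ofReal (|f ((d i : ℝ) / N) - f ((c i : ℝ) / N)| / l (w i))
        + ENNReal.ofReal (2 * η / l 0) := by
    intro i
    have t1 := hv (d i) (hdN i)
    have t2 := hv (c i) ((hcd i).trans (hdN i))
    have h1 : |v (d i) - v (c i)| ≤ |f ((d i : ℝ) / N) - f ((c i : ℝ) / N)| + 2 * η := by
      calc |v (d i) - v (c i)|
          = |(v (d i) - f ((d i : ℝ)/N)) + (f ((d i : ℝ)/N) - f ((c i : ℝ)/N))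
              + (f ((c i : ℝ)/N) - v (c i))| := by congr 1; ring
        _ ≤ |v (d i) - f ((d i : ℝ)/N)| + |f ((d i : ℝ)/N) - f ((c i : ℝ)/N)|
              + |f ((c i : ℝ)/N) - v (c i)| := by
            refine (abs_add_le _ _).trans ?_
            have := abs_add_le (v (d i) - f ((d i : ℝ)/N)) (f ((d i : ℝ)/N) - f ((c i : ℝ)/N))
            linarith
        _ ≤ |f ((d i : ℝ) / N) - f ((c i : ℝ) / N)| + 2 * η := by
            rw [abs_sub_comm (f ((c i : ℝ)/N)) (v (c i))]
            linarith
    have hl1 : 0 < l (w i) := hp _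
    have hl0 : 0 < l 0 := hp 0
    have hll : l 0 ≤ l (w i) := hm (Nat.zero_le _)
    have h2 : |v (d i) - v (c i)| / l (w i)
        ≤ |f ((d i : ℝ)/N) - f ((c i : ℝ)/N)| / l (w i) + 2 * η / l 0 := by
      calc |v (d i) - v (c i)| / l (w i)
          ≤ (|f ((d i : ℝ)/N) - f ((c i : ℝ)/N)| + 2 * η) / l (w i) :=
            div_le_div₀ (by positivity) h1 hl1 le_rfl
        _ = |f ((d i : ℝ)/N) - f ((c i : ℝ)/N)| / l (w i) + 2 * η / l (w i) := add_div _ _ _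
        _ ≤ |f ((d i : ℝ)/N) - f ((c i : ℝ)/N)| / l (w i) + 2 * η / l 0 := by
            have : 2 * η / l (w i) ≤ 2 * η / l 0 := div_le_div₀ (by positivity) le_rfl hl0 hll
            linarith
    exact (ENNReal.ofReal_le_ofReal h2).trans ENNReal.ofReal_add_le
  calc ∑ i, ENNReal.ofReal (|v (d i) - v (c i)| / l (w i))
      ≤ ∑ i : ι, (ENNReal.ofReal (|f ((d i : ℝ) / N) - f ((c i : ℝ) / N)| / l (w i))
          + ENNReal.ofReal (2 * η / l 0)) := Finset.sum_le_sum fun i _ => key i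
    _ = (∑ i : ι, ENNReal.ofReal (|f ((d i : ℝ) / N) - f ((c i : ℝ) / N)| / l (w i)))
          + (Fintype.card ι : ℝ≥0∞) * ENNReal.ofReal (2 * η / l 0) := by
        rw [Finset.sum_add_distrib, Finset.sum_const, Finset.card_univ, nsmul_eq_mul]
    _ ≤ lamVar l f + (Fintype.card ι : ℝ≥0∞) * ENNReal.ofReal (2 * η / l 0) := by
        refine add_le_add_left ?_ _
        refine lemA l f (fun i => (c i : ℝ)/N) (fun i => (d i : ℝ)/N) w hw ?_ ?_
        · intro i
          refine ⟨by positivity, ?_, ?_⟩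
          · have : (c i : ℝ) ≤ (d i : ℝ) := by exact_mod_cast hcd i
            exact div_le_div₀ (by positivity) this hN0 le_rfl
          · have : (d i : ℝ) ≤ (N : ℝ) := by exact_mod_cast hdN i
            rw [div_le_one hN0]
            exact this
        · intro i j hij
          rcases hno i j hij with hc | hc
          · left
            have : (d i : ℝ) ≤ (c j : ℝ) := by exact_mod_cast hc
            exact div_le_div₀ (by positivity) this hN0 le_rfl
          · right
            have : (d j : ℝ) ≤ (c i : ℝ) := by exact_mod_cast hc
            exact div_le_div₀ (by positivity) this hN0 le_rfl


lemma split_bound {l : ℕ → ℝ} (hm : Monotone l) (hp : ∀ n, 0 < l n) (f g : ℝ → ℝ) (M : ℕ)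
    {H : ℝ} (hH : ∀ y ∈ Set.Icc (0:ℝ) 1, |f y - g y| ≤ H) :
    lamVar l (fun y => f y - g y) ≤ (M : ℝ≥0∞) * ENNReal.ofReal (2 * H / l 0)
      + lamVar (fun n => l (n + M)) f + lamVar (fun n => l (n + M)) g := by
  classical
  refine iSup_le fun m => iSup_le fun x => iSup_le fun hx => iSup_le fun hmem =>
    iSup_le fun β => ?_
  set h : ℝ → ℝ := fun y => f y - g y with hh
  have hH0 : 0 ≤ H := le_trans (abs_nonneg _) (hH 0 (by constructor <;> norm_num))
  set J1 : Finset (Fin m) := Finset.univ.filter (fun j => (β j : ℕ) < M) with hJ1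
  rw [← Finset.sum_filter_add_sum_filter_not Finset.univ (fun j => (β j : ℕ) < M)]
  have bound1 : ∑ j ∈ J1, ENNReal.ofReal (|h (x j.succ) - h (x j.castSucc)| / l (β j))
      ≤ (M : ℝ≥0∞) * ENNReal.ofReal (2 * H / l 0) := by
    have each : ∀ j ∈ J1, ENNReal.ofReal (|h (x j.succ) - h (x j.castSucc)| / l (β j))
        ≤ ENNReal.ofReal (2 * H / l 0) := by
      intro j _
      refine ENNReal.ofReal_le_ofReal ?_
      refine div_le_div₀ (by positivity) ?_ (hp 0) (hm (Nat.zero_le _))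
      have m1 := hH (x j.succ) (hmem _)
      have m2 := hH (x j.castSucc) (hmem _)
      calc |h (x j.succ) - h (x j.castSucc)| ≤ |h (x j.succ)| + |h (x j.castSucc)| :=
            abs_sub _ _
        _ ≤ 2 * H := by rw [hh]; simp only; linarith
    calc ∑ j ∈ J1, ENNReal.ofReal (|h (x j.succ) - h (x j.castSucc)| / l (β j))
        ≤ J1.card • ENNReal.ofReal (2 * H / l 0) := Finset.sum_le_card_nsmul _ _ _ each
      _ = (J1.card : ℝ≥0∞) * ENNReal.ofReal (2 * H / l 0) := nsmul_eq_mul _ _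
      _ ≤ (M : ℝ≥0∞) * ENNReal.ofReal (2 * H / l 0) := by
          refine mul_le_mul_left ?_ _
          refine Nat.cast_le.2 ?_
          have : J1.card ≤ (Finset.range M).card := by
            refine Finset.card_le_card_of_injOn (fun j => (β j : ℕ)) ?_ ?_
            · intro j hj
              rw [Finset.mem_coe, Finset.mem_range]
              exact (Finset.mem_filter.1 hj).2
            · intro a _ b _ hab
              exact β.injective (Fin.ext hab)
          simpa using this
  have bound2 : ∑ j ∈ Finset.univ.filter (fun j => ¬ ((β j : ℕ) < M)),
      ENNReal.ofReal (|h (x j.succ) - h (x j.castSucc)| / l (β j))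
      ≤ lamVar (fun n => l (n + M)) f + lamVar (fun n => l (n + M)) g := by
    set J2 := Finset.univ.filter (fun j : Fin m => ¬ ((β j : ℕ) < M)) with hJ2
    have hMle : ∀ j : {j : Fin m // j ∈ J2}, M ≤ (β j.1 : ℕ) := by
      intro j
      have := (Finset.mem_filter.1 j.2).2
      omega
    have each : ∀ j ∈ J2, ENNReal.ofReal (|h (x j.succ) - h (x j.castSucc)| / l (β j))
        ≤ ENNReal.ofReal (|f (x j.succ) - f (x j.castSucc)| / l (β j))
          + ENNReal.ofReal (|g (x j.succ) - g (x j.castSucc)| / l (β j)) := by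
      intro j _
      have tri : |h (x j.succ) - h (x j.castSucc)|
          ≤ |f (x j.succ) - f (x j.castSucc)| + |g (x j.succ) - g (x j.castSucc)| := by
        rw [hh]
        simp only
        calc |f (x j.succ) - g (x j.succ) - (f (x j.castSucc) - g (x j.castSucc))|
            = |(f (x j.succ) - f (x j.castSucc)) - (g (x j.succ) - g (x j.castSucc))| := by
              congr 1; ring
          _ ≤ _ := abs_sub _ _
      have hdiv : |h (x j.succ) - h (x j.castSucc)| / l (β j)
          ≤ |f (x j.succ) - f (x j.castSucc)| / l (β j)
            + |g (x j.succ) - g (x j.castSucc)| / l (β j) := by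
        rw [← add_div]
        exact div_le_div₀ (by positivity) tri (hp _) le_rfl
      exact (ENNReal.ofReal_le_ofReal hdiv).trans ENNReal.ofReal_add_le
    refine (Finset.sum_le_sum each).trans ?_
    rw [Finset.sum_add_distrib]
    have key : ∀ (F : ℝ → ℝ), (∑ j ∈ J2, ENNReal.ofReal (|F (x j.succ) - F (x j.castSucc)| / l (β j)))
        ≤ lamVar (fun n => l (n + M)) F := by
      intro F
      rw [← Finset.sum_coe_sort J2 (fun j => ENNReal.ofReal (|F (x j.succ) - F (x j.castSucc)| / l (β j)))]
      have := lemA (fun n => l (n + M)) F (ι := {j : Fin m // j ∈ J2})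
        (fun j => x j.1.castSucc) (fun j => x j.1.succ) (fun j => (β j.1 : ℕ) - M)
        ?_ ?_ ?_
      · refine le_trans (le_of_eq ?_) this
        refine Finset.sum_congr rfl fun j _ => ?_
        have hMj := hMle j
        have harg : (β j.1 : ℕ) - M + M = (β j.1 : ℕ) := by omega
        simp only [harg]
      · intro a b hab
        have ha := hMle a
        have hb := hMle b
        have hab' : (β a.1 : ℕ) - M = (β b.1 : ℕ) - M := hab
        have : (β a.1 : ℕ) = (β b.1 : ℕ) := by omega
        exact Subtype.ext (β.injective (Fin.ext this))
      · intro j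
        exact ⟨(hmem _).1, hx (Fin.castSucc_le_succ _), (hmem _).2⟩
      · intro a b hab
        have hne : a.1 ≠ b.1 := fun hc => hab (Subtype.ext hc)
        rcases lt_or_gt_of_ne hne with hlt | hlt
        · left
          refine hx ?_
          have h1 : a.1.val < b.1.val := hlt
          show (a.1.succ : Fin (m+1)) ≤ b.1.castSucc
          rw [Fin.le_def, Fin.val_succ, Fin.coe_castSucc]
          omega
        · right
          refine hx ?_
          show (b.1.succ : Fin (m+1)) ≤ a.1.castSucc
          rw [Fin.le_def, Fin.val_succ, Fin.coe_castSucc]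
          have h1 : b.1.val < a.1.val := hlt
          omega
    exact add_le_add (key f) (key g)
  calc (∑ j ∈ J1, ENNReal.ofReal (|h (x j.succ) - h (x j.castSucc)| / l (β j)))
      + ∑ j ∈ Finset.univ.filter (fun j => ¬ ((β j : ℕ) < M)),
        ENNReal.ofReal (|h (x j.succ) - h (x j.castSucc)| / l (β j))
      ≤ (M : ℝ≥0∞) * ENNReal.ofReal (2 * H / l 0)
        + (lamVar (fun n => l (n + M)) f + lamVar (fun n => l (n + M)) g) :=
        add_le_add bound1 bound2
    _ = _ := by rw [add_assoc]

lemma assembleC {l : ℕ → ℝ} (hm : Monotone l) (hp : ∀ n, 0 < l n) (f : ℝ → ℝ) (v : ℕ → ℝ)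
    {N : ℕ} (hN : 1 ≤ N) {η : ℝ} (hη : 0 ≤ η) (hv : ∀ i, i ≤ N → |v i - f (i / N)| ≤ η)
    (S2 : Finset ℕ) (hS2sub : S2 ⊆ Finset.range N) (hS2N : ∀ P : {P // P ∈ S2}, P.1 + 1 ≤ N)
    (MP : {P // P ∈ S2} → ℕ) (hinj : Function.Injective MP)
    (G : ℕ → ℝ≥0∞)
    (hG : ∀ P : {P // P ∈ S2}, G P.1 ≤ ENNReal.ofReal (|v (P.1 + 1) - v P.1| / l (MP P))) :
    ∑ P ∈ S2, G P ≤ lamVar l f + (N : ℝ≥0∞) * ENNReal.ofReal (2 * η / l 0) := by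
  classical
  have H := @helperC l hm hp f v N hN η hη hv {P // P ∈ S2} (FinsetCoe.fintype S2)
    (fun P => P.1) (fun P => P.1 + 1) (fun P => Nat.le_succ _) hS2N MP hinj
    (by
      intro a b hab
      have : a.1 ≠ b.1 := fun hc => hab (Subtype.ext hc)
      show a.1 + 1 ≤ b.1 ∨ b.1 + 1 ≤ a.1
      omega)
  rw [← Finset.sum_attach S2 G]
  refine le_trans (Finset.sum_le_sum fun P _ => hG P) (le_trans H ?_)
  refine add_le_add_right (mul_le_mul_left ?_ _) _
  refine Nat.cast_le.2 ?_
  rw [Fintype.card_coe]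
  exact le_trans (Finset.card_le_card hS2sub) (le_of_eq (Finset.card_range N))


lemma assembleST {l : ℕ → ℝ} (hm : Monotone l) (hp : ∀ n, 0 < l n) (f : ℝ → ℝ) (v : ℕ → ℝ)
    {N : ℕ} (hN : 1 ≤ N) {η : ℝ} (hη : 0 ≤ η) (hv : ∀ i, i ≤ N → |v i - f (i / N)| ≤ η)
    {m : ℕ} (ST : Finset (Fin m)) (c d : Fin m → ℕ)
    (hcd : ∀ j ∈ ST, c j ≤ d j) (hdN : ∀ j ∈ ST, d j ≤ N)
    (w : Fin m → ℕ) (hw : ∀ a b, a ∈ ST → b ∈ ST → w a = w b → a = b)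
    (hno : ∀ a b, a ∈ ST → b ∈ ST → a.val < b.val → d a ≤ c b)
    (hcard : ST.card ≤ N) :
    ∑ j ∈ ST, ENNReal.ofReal (|v (d j) - v (c j)| / l (w j))
      ≤ lamVar l f + (N : ℝ≥0∞) * ENNReal.ofReal (2 * η / l 0) := by
  classical
  have H := @helperC l hm hp f v N hN η hη hv {j // j ∈ ST} (FinsetCoe.fintype ST)
    (fun j => c j.1) (fun j => d j.1) (fun j => hcd j.1 j.2) (fun j => hdN j.1 j.2)
    (fun j => w j.1)
    (by
      intro a b hab
      exact Subtype.ext (hw a.1 b.1 a.2 b.2 hab))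
    (by
      intro a b hab
      have hne : a.1 ≠ b.1 := fun hc => hab (Subtype.ext hc)
      rcases lt_or_gt_of_ne (fun hc : a.1.val = b.1.val => hne (Fin.ext hc)) with hlt | hlt
      · exact Or.inl (hno a.1 b.1 a.2 b.2 hlt)
      · exact Or.inr (hno b.1 a.1 b.2 a.2 hlt))
  rw [← Finset.sum_attach ST (fun j => ENNReal.ofReal (|v (d j) - v (c j)| / l (w j)))]
  refine le_trans (le_of_eq rfl) (le_trans H ?_)
  refine add_le_add_right (mul_le_mul_left ?_ _) _
  refine Nat.cast_le.2 ?_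
  rw [Fintype.card_coe]
  exact hcard


lemma P2 {l : ℕ → ℝ} (hm : Monotone l) (hp : ∀ n, 0 < l n) (f : ℝ → ℝ)
    {N : ℕ} (hN : 1 ≤ N) (v : ℕ → ℝ) {η : ℝ} (hη : 0 ≤ η)
    (hv : ∀ i, i ≤ N → |v i - f (i / N)| ≤ η) :
    lamVar l (pwl N v) ≤ 4 * lamVar l f + 4 * (N : ℝ≥0∞) * ENNReal.ofReal (2 * η / l 0) := by
  classical
  have hNR : (0:ℝ) < (N:ℝ) := by exact_mod_cast hN
  refine iSup_le fun m => iSup_le fun x => iSup_le fun hx => iSup_le fun hmem =>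
    iSup_le fun β => ?_
  set g := pwl N v with hg
  set Vf := lamVar l f with hVf
  set EC : ℝ≥0∞ := ENNReal.ofReal (2 * η / l 0) with hEC
  -- basic facts
  have hx0 : ∀ j, 0 ≤ x j := fun j => (hmem j).1
  have hx1 : ∀ j, x j ≤ 1 := fun j => (hmem j).2
  have haff : ∀ j, g (x j) = v (pc N (x j))
      + ((N:ℝ) * x j - pc N (x j)) * (v (pc N (x j) + 1) - v (pc N (x j))) :=
    fun j => pwl_eq_affine N hN v (hx0 j) (hx1 j)
  have hθ0 : ∀ j, 0 ≤ (N:ℝ) * x j - pc N (x j) := by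
    intro j
    have := pc_left N (hx0 j)
    rw [mul_comm] at this
    linarith
  have hθ1 : ∀ j, (N:ℝ) * x j - pc N (x j) ≤ 1 := by
    intro j
    have := pc_right N hN (hx0 j) (hx1 j)
    rw [mul_comm] at this
    linarith
  have hpcN : ∀ j, pc N (x j) + 1 ≤ N := by
    intro j
    have := pc_le N (x j)
    omega
  have hwide : ∀ j : Fin m, pc N (x j.castSucc) ≤ pc N (x j.succ) :=
    fun j => pc_mono N (hx (Fin.castSucc_le_succ j))
  have horder : ∀ (i j : Fin m), i.val < j.val → pc N (x i.succ) ≤ pc N (x j.castSucc) := by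
    intro i j hij
    refine pc_mono N (hx ?_)
    rw [Fin.le_def, Fin.val_succ, Fin.coe_castSucc]
    omega
  set T : Fin m → ℝ≥0∞ := fun j =>
    ENNReal.ofReal (|g (x j.succ) - g (x j.castSucc)| / l (β j)) with hT
  set NS : Finset (Fin m) :=
    Finset.univ.filter (fun j => pc N (x j.castSucc) = pc N (x j.succ)) with hNS
  rw [show ∑ j : Fin m, T j
      = (∑ j ∈ NS, T j) + ∑ j ∈ Finset.univ.filter
          (fun j => ¬ pc N (x j.castSucc) = pc N (x j.succ)), T j from
    (Finset.sum_filter_add_sum_filter_not _ _ _).symm]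
  set ST : Finset (Fin m) :=
    Finset.univ.filter (fun j => ¬ pc N (x j.castSucc) = pc N (x j.succ)) with hST
  have hSTlt : ∀ j ∈ ST, pc N (x j.castSucc) < pc N (x j.succ) := by
    intro j hj
    exact lt_of_le_of_ne (hwide j) (by simpa [hST] using (Finset.mem_filter.1 hj).2)
  -- ========== NS part ==========
  have NSbound : ∑ j ∈ NS, T j ≤ Vf + (N : ℝ≥0∞) * EC := by
    have hmaps : ∀ j ∈ NS, pc N (x j.castSucc) ∈ Finset.range N := by
      intro j _
      rw [Finset.mem_range]
      have := pc_le N (x j.castSucc)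
      omega
    rw [← Finset.sum_fiberwise_of_maps_to hmaps T]
    set fib : ℕ → Finset (Fin m) :=
      fun P => NS.filter (fun j => pc N (x j.castSucc) = P) with hfib
    set S2 : Finset ℕ := (Finset.range N).filter (fun P => (fib P).Nonempty) with hS2
    have hsum2 : ∑ P ∈ Finset.range N, ∑ j ∈ fib P, T j = ∑ P ∈ S2, ∑ j ∈ fib P, T j := by
      refine (Finset.sum_subset (Finset.filter_subset _ _) ?_).symm
      intro P hP hPS
      have : ¬ (fib P).Nonempty := fun hc => hPS (Finset.mem_filter.2 ⟨hP, hc⟩)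
      rw [Finset.not_nonempty_iff_eq_empty.1 this, Finset.sum_empty]
    rw [hsum2]
    have hfibne : ∀ P : {P // P ∈ S2}, (fib P.1).Nonempty :=
      fun P => (Finset.mem_filter.1 P.2).2
    set MP : {P // P ∈ S2} → ℕ :=
      fun P => ((fib P.1).image (fun j => (β j : ℕ))).min' ((hfibne P).image _) with hMP
    have hMPmem : ∀ P : {P // P ∈ S2}, MP P ∈ (fib P.1).image (fun j => (β j : ℕ)) :=
      fun P => Finset.min'_mem _ _
    have hfibP : ∀ (P : ℕ) (j : Fin m), j ∈ fib P →
        pc N (x j.castSucc) = P ∧ pc N (x j.succ) = P := by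
      intro P j hj
      have h1 := Finset.mem_filter.1 hj
      have h2 := (Finset.mem_filter.1 h1.1).2
      exact ⟨h1.2, by rw [← h2, h1.2]⟩
    have hS2N : ∀ P : {P // P ∈ S2}, P.1 + 1 ≤ N := by
      intro P
      have : P.1 < N := Finset.mem_range.1 (Finset.mem_filter.1 P.2).1
      omega
    have hMPinj : Function.Injective MP := by
      intro a b hab
      obtain ⟨ja, hja, hja2⟩ := Finset.mem_image.1 (hMPmem a)
      obtain ⟨jb, hjb, hjb2⟩ := Finset.mem_image.1 (hMPmem b)
      rw [hab] at hja2
      have : ja = jb := β.injective (Fin.ext (by rw [hja2, hjb2]))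
      subst this
      have e1 := (Finset.mem_filter.1 hja).2
      have e2 := (Finset.mem_filter.1 hjb).2
      exact Subtype.ext (e1 ▸ e2 ▸ rfl)
    -- per-fiber bound
    have perfib : ∀ P : {P // P ∈ S2},
        ∑ j ∈ fib P.1, T j ≤ ENNReal.ofReal (|v (P.1 + 1) - v P.1| / l (MP P)) := by
      intro P
      have step1 : ∀ j ∈ fib P.1, T j ≤ ENNReal.ofReal
          ((N:ℝ) * (x j.succ - x j.castSucc) * |v (P.1 + 1) - v P.1| / l (MP P)) := by
        intro j hj
        obtain ⟨e1, e2⟩ := hfibP P.1 j hj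
        have hgab : g (x j.succ) - g (x j.castSucc)
            = (N:ℝ) * (x j.succ - x j.castSucc) * (v (P.1 + 1) - v P.1) := by
          rw [haff j.succ, haff j.castSucc, e1, e2]
          ring
        have hba : (0:ℝ) ≤ x j.succ - x j.castSucc := by
          have : x j.castSucc ≤ x j.succ := hx (Fin.castSucc_le_succ j)
          linarith
        have habs : |g (x j.succ) - g (x j.castSucc)|
            = (N:ℝ) * (x j.succ - x j.castSucc) * |v (P.1 + 1) - v P.1| := by
          rw [hgab, abs_mul]
          congr 1
          exact abs_of_nonneg (by nlinarith)
        have hMPle : MP P ≤ (β j : ℕ) :=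
          Finset.min'_le _ _ (Finset.mem_image_of_mem _ hj)
        rw [hT]
        simp only
        rw [habs]
        refine ENNReal.ofReal_le_ofReal ?_
        exact div_le_div₀ (mul_nonneg (mul_nonneg hNR.le hba) (abs_nonneg _))
          le_rfl (hp _) (hm hMPle)
      refine (Finset.sum_le_sum step1).trans ?_
      rw [← ENNReal.ofReal_sum_of_nonneg (by
        intro j hj
        have hba : (0:ℝ) ≤ x j.succ - x j.castSucc := by
          have : x j.castSucc ≤ x j.succ := hx (Fin.castSucc_le_succ j)
          linarith
        exact div_nonneg (mul_nonneg (mul_nonneg hNR.le hba) (abs_nonneg _)) (hp _).le)]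
      refine ENNReal.ofReal_le_ofReal ?_
      have hlen : ∑ j ∈ fib P.1, (x j.succ - x j.castSucc) ≤ 1 / N := by
        have := sum_gap_le hx (fib P.1) (hfibne P)
          (A := (P.1 : ℝ)/N) (B := ((P.1 : ℝ)+1)/N) ?_ ?_
        · calc ∑ j ∈ fib P.1, (x j.succ - x j.castSucc)
              ≤ ((P.1 : ℝ)+1)/N - (P.1 : ℝ)/N := this
            _ = 1/N := by field_simp; ring
        · intro j hj
          obtain ⟨e1, _⟩ := hfibP P.1 j hj
          have := pc_left N (hx0 j.castSucc)
          rw [e1] at this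
          rw [div_le_iff₀ hNR]
          linarith [this]
        · intro j hj
          obtain ⟨_, e2⟩ := hfibP P.1 j hj
          have := pc_right N hN (hx0 j.succ) (hx1 j.succ)
          rw [e2] at this
          rw [← le_div_iff₀ hNR] at this
          exact this
      have e3 : ∑ j ∈ fib P.1, (N:ℝ) * (x j.succ - x j.castSucc) * |v (P.1 + 1) - v P.1| / l (MP P)
          = (N:ℝ) * (∑ j ∈ fib P.1, (x j.succ - x j.castSucc)) * |v (P.1 + 1) - v P.1| / l (MP P) := by
        rw [← Finset.sum_div, ← Finset.sum_mul, ← Finset.mul_sum]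
      rw [e3]
      have h5 := hp (MP P)
      refine div_le_div₀ (by positivity) ?_ h5 le_rfl
      have h6 : (N:ℝ) * (∑ j ∈ fib P.1, (x j.succ - x j.castSucc)) ≤ 1 := by
        calc (N:ℝ) * (∑ j ∈ fib P.1, (x j.succ - x j.castSucc)) ≤ (N:ℝ) * (1/N) :=
              mul_le_mul_of_nonneg_left hlen (le_of_lt hNR)
          _ = 1 := by field_simp
      nlinarith [abs_nonneg (v (P.1 + 1) - v P.1)]
    exact assembleC hm hp f v hN hη hv S2 (Finset.filter_subset _ _) hS2N MP hMPinj _ perfib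
  -- ========== ST part ==========
  have hSTord : ∀ a b : Fin m, a ∈ ST → b ∈ ST → a.val < b.val →
      pc N (x a.succ) ≤ pc N (x b.castSucc) := fun a b _ _ hab => horder a b hab
  have STboundk : ∀ (c d : Fin m → ℕ),
      (∀ j ∈ ST, c j ≤ d j) → (∀ j ∈ ST, d j ≤ N) →
      (∀ a b, a ∈ ST → b ∈ ST → a.val < b.val → d a ≤ c b) →
      ∑ j ∈ ST, ENNReal.ofReal (|v (d j) - v (c j)| / l (β j))
        ≤ Vf + (N : ℝ≥0∞) * EC := by
    intro c d hcd hdN hno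
    refine assembleST hm hp f v hN hη hv ST (fun j => c j) (fun j => d j)
      hcd hdN (fun j => (β j : ℕ)) ?_ hno ?_
    · intro a b ha hb hab
      exact β.injective (Fin.ext hab)
    · refine le_trans (Finset.card_le_card_of_injOn (fun j => pc N (x j.succ)) ?_ ?_)
        (le_of_eq (Finset.card_range N))
      · intro j hj
        rw [Finset.mem_coe, Finset.mem_range]
        show pc N (x j.succ) < N
        have := pc_le N (x j.succ)
        omega
      · intro a ha b hb hab
        have hab' : pc N (x a.succ) = pc N (x b.succ) := hab
        by_contra hne
        rcases lt_or_gt_of_ne (fun hc : a.val = b.val => hne (Fin.ext hc)) with hlt | hlt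
        · have h1 := hSTord a b ha hb hlt
          have h2 := hSTlt b hb
          omega
        · have h1 := hSTord b a hb ha hlt
          have h2 := hSTlt a ha
          omega
  have STbound : ∑ j ∈ ST, T j ≤ 3 * (Vf + (N : ℝ≥0∞) * EC) := by
    have term : ∀ j ∈ ST, T j ≤
        ENNReal.ofReal (|v (pc N (x j.succ) + 1) - v (pc N (x j.succ))| / l (β j))
        + ENNReal.ofReal (|v (pc N (x j.succ)) - v (pc N (x j.castSucc) + 1)| / l (β j))
        + ENNReal.ofReal (|v (pc N (x j.castSucc) + 1) - v (pc N (x j.castSucc))| / l (β j)) := by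
      intro j hj
      set Pa := pc N (x j.castSucc) with hPa
      set Pb := pc N (x j.succ) with hPb
      have h1 : g (x j.succ) - g (x j.castSucc)
          = ((N:ℝ) * x j.succ - Pb) * (v (Pb+1) - v Pb)
            + (v Pb - v (Pa+1))
            + (1 - ((N:ℝ) * x j.castSucc - Pa)) * (v (Pa+1) - v Pa) := by
        rw [haff j.succ, haff j.castSucc]
        ring
      have habs : |g (x j.succ) - g (x j.castSucc)|
          ≤ |v (Pb+1) - v Pb| + |v Pb - v (Pa+1)| + |v (Pa+1) - v Pa| := by
        rw [h1]
        have b1 : |((N:ℝ) * x j.succ - Pb) * (v (Pb+1) - v Pb)| ≤ |v (Pb+1) - v Pb| := by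
          rw [abs_mul]
          have := hθ0 j.succ
          have := hθ1 j.succ
          rw [abs_of_nonneg (by rw [hPb]; linarith)]
          nlinarith [abs_nonneg (v (Pb+1) - v Pb)]
        have b3 : |(1 - ((N:ℝ) * x j.castSucc - Pa)) * (v (Pa+1) - v Pa)| ≤ |v (Pa+1) - v Pa| := by
          rw [abs_mul]
          have := hθ0 j.castSucc
          have := hθ1 j.castSucc
          rw [abs_of_nonneg (by rw [hPa]; linarith)]
          nlinarith [abs_nonneg (v (Pa+1) - v Pa)]
        calc |((N:ℝ) * x j.succ - Pb) * (v (Pb+1) - v Pb) + (v Pb - v (Pa+1))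
              + (1 - ((N:ℝ) * x j.castSucc - Pa)) * (v (Pa+1) - v Pa)|
            ≤ |((N:ℝ) * x j.succ - Pb) * (v (Pb+1) - v Pb) + (v Pb - v (Pa+1))|
              + |(1 - ((N:ℝ) * x j.castSucc - Pa)) * (v (Pa+1) - v Pa)| := abs_add_le _ _
          _ ≤ |((N:ℝ) * x j.succ - Pb) * (v (Pb+1) - v Pb)| + |v Pb - v (Pa+1)|
              + |(1 - ((N:ℝ) * x j.castSucc - Pa)) * (v (Pa+1) - v Pa)| := by
                have := abs_add_le (((N:ℝ) * x j.succ - Pb) * (v (Pb+1) - v Pb)) (v Pb - v (Pa+1))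
                linarith
          _ ≤ _ := by linarith
      have hdiv : |g (x j.succ) - g (x j.castSucc)| / l (β j)
          ≤ |v (Pb+1) - v Pb| / l (β j) + |v Pb - v (Pa+1)| / l (β j)
            + |v (Pa+1) - v Pa| / l (β j) := by
        rw [← add_div, ← add_div]
        exact div_le_div₀ (by positivity) habs (hp _) le_rfl
      rw [hT]
      simp only
      calc ENNReal.ofReal (|g (x j.succ) - g (x j.castSucc)| / l (β j))
          ≤ ENNReal.ofReal (|v (Pb+1) - v Pb| / l (β j) + |v Pb - v (Pa+1)| / l (β j)
              + |v (Pa+1) - v Pa| / l (β j)) := ENNReal.ofReal_le_ofReal hdiv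
        _ ≤ ENNReal.ofReal (|v (Pb+1) - v Pb| / l (β j) + |v Pb - v (Pa+1)| / l (β j))
              + ENNReal.ofReal (|v (Pa+1) - v Pa| / l (β j)) := ENNReal.ofReal_add_le
        _ ≤ _ := by
            refine add_le_add_left ?_ _
            exact ENNReal.ofReal_add_le
    calc ∑ j ∈ ST, T j
        ≤ ∑ j ∈ ST, (ENNReal.ofReal (|v (pc N (x j.succ) + 1) - v (pc N (x j.succ))| / l (β j))
          + ENNReal.ofReal (|v (pc N (x j.succ)) - v (pc N (x j.castSucc) + 1)| / l (β j))
          + ENNReal.ofReal (|v (pc N (x j.castSucc) + 1) - v (pc N (x j.castSucc))| / l (β j))) :=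
          Finset.sum_le_sum term
      _ = (∑ j ∈ ST, ENNReal.ofReal (|v (pc N (x j.succ) + 1) - v (pc N (x j.succ))| / l (β j)))
          + (∑ j ∈ ST, ENNReal.ofReal (|v (pc N (x j.succ)) - v (pc N (x j.castSucc) + 1)| / l (β j)))
          + ∑ j ∈ ST, ENNReal.ofReal (|v (pc N (x j.castSucc) + 1) - v (pc N (x j.castSucc))| / l (β j)) := by
          rw [Finset.sum_add_distrib, Finset.sum_add_distrib]
      _ ≤ (Vf + (N : ℝ≥0∞) * EC) + (Vf + (N : ℝ≥0∞) * EC) + (Vf + (N : ℝ≥0∞) * EC) := by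
          refine add_le_add (add_le_add ?_ ?_) ?_
          · refine STboundk (fun j => pc N (x j.succ)) (fun j => pc N (x j.succ) + 1)
              (fun j _ => Nat.le_succ _) (fun j _ => hpcN j.succ) ?_
            intro a b ha hb hab
            have h1 := hSTord a b ha hb hab
            have h2 := hSTlt b hb
            show pc N (x a.succ) + 1 ≤ pc N (x b.succ)
            omega
          · refine STboundk (fun j => pc N (x j.castSucc) + 1) (fun j => pc N (x j.succ))
              (fun j hj => hSTlt j hj)
              (fun j _ => by show pc N (x j.succ) ≤ N; have := pc_le N (x j.succ); omega) ?_
            intro a b ha hb hab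
            have h1 := hSTord a b ha hb hab
            show pc N (x a.succ) ≤ pc N (x b.castSucc) + 1
            omega
          · refine STboundk (fun j => pc N (x j.castSucc)) (fun j => pc N (x j.castSucc) + 1)
              (fun j _ => Nat.le_succ _) (fun j hj => by
                show pc N (x j.castSucc) + 1 ≤ N
                have h2 := hSTlt j hj
                have := pc_le N (x j.succ)
                omega) ?_
            intro a b ha hb hab
            have h1 := hSTord a b ha hb hab
            have h2 := hSTlt a ha
            show pc N (x a.castSucc) + 1 ≤ pc N (x b.castSucc)
            omega
      _ = 3 * (Vf + (N : ℝ≥0∞) * EC) := by ring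
  calc (∑ j ∈ NS, T j) + ∑ j ∈ ST, T j
      ≤ (Vf + (N : ℝ≥0∞) * EC) + 3 * (Vf + (N : ℝ≥0∞) * EC) := add_le_add NSbound STbound
    _ = 4 * Vf + 4 * (N : ℝ≥0∞) * EC := by ring

lemma pwl_close (f : ℝ → ℝ) {N : ℕ} (hN : 1 ≤ N) (v : ℕ → ℝ) {η ω : ℝ} (hη : 0 ≤ η)
    (hω : ∀ u u', u ∈ Set.Icc (0:ℝ) 1 → u' ∈ Set.Icc (0:ℝ) 1 → |u - u'| ≤ 1/N → |f u - f u'| ≤ ω)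
    (hv : ∀ i, i ≤ N → |v i - f (i / N)| ≤ η) :
    ∀ y ∈ Set.Icc (0:ℝ) 1, |f y - pwl N v y| ≤ 2*ω + 3*η := by
  intro y hy
  have hNR : (0:ℝ) < (N:ℝ) := by exact_mod_cast hN
  set P := pc N y with hP
  have hPN : P + 1 ≤ N := by have := pc_le N y; omega
  have hl : (P:ℝ)/N ≤ y := by
    rw [div_le_iff₀ hNR]
    exact pc_left N hy.1
  have hr : y ≤ ((P:ℝ)+1)/N := by
    rw [le_div_iff₀ hNR]
    have := pc_right N hN hy.1 hy.2
    linarith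
  have hPmem : (P:ℝ)/N ∈ Set.Icc (0:ℝ) 1 := by
    constructor
    · positivity
    · rw [div_le_one hNR]
      have : (P:ℝ) ≤ (N:ℝ) := by exact_mod_cast Nat.le_of_succ_le hPN
      linarith
  have hP1mem : ((P:ℝ)+1)/N ∈ Set.Icc (0:ℝ) 1 := by
    constructor
    · positivity
    · rw [div_le_one hNR]
      exact_mod_cast hPN
  have hθ0 : 0 ≤ (N:ℝ)*y - P := by
    have := pc_left N hy.1
    rw [mul_comm] at this ⊢
    linarith
  have hθ1 : (N:ℝ)*y - P ≤ 1 := by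
    have := pc_right N hN hy.1 hy.2
    rw [mul_comm]
    linarith
  have haff := pwl_eq_affine N hN v hy.1 hy.2
  have hΔv : |v (P+1) - v P| ≤ ω + 2*η := by
    have t1 := hv (P+1) hPN
    have t2 := hv P (Nat.le_of_succ_le hPN)
    have t3 : |f (((P:ℕ)+1 : ℕ) / (N:ℝ)) - f ((P:ℝ)/N)| ≤ ω := by
      push_cast
      refine hω _ _ hP1mem hPmem ?_
      rw [show ((P:ℝ)+1)/N - (P:ℝ)/N = 1/N from by field_simp; ring]
      rw [abs_of_nonneg (by positivity)]
    have t3' : |f (((P:ℝ)+1) / N) - f ((P:ℝ)/N)| ≤ ω := by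
      have : (((P:ℕ)+1 : ℕ) : ℝ) = (P:ℝ)+1 := by push_cast; ring
      rwa [this] at t3
    have t1' : |v (P+1) - f (((P:ℝ)+1)/N)| ≤ η := by
      have : (((P:ℕ)+1 : ℕ) : ℝ) = (P:ℝ)+1 := by push_cast; ring
      rwa [this] at t1
    calc |v (P+1) - v P|
        = |(v (P+1) - f (((P:ℝ)+1)/N)) + (f (((P:ℝ)+1)/N) - f ((P:ℝ)/N))
            + (f ((P:ℝ)/N) - v P)| := by congr 1; ring
      _ ≤ |v (P+1) - f (((P:ℝ)+1)/N)| + |f (((P:ℝ)+1)/N) - f ((P:ℝ)/N)|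
            + |f ((P:ℝ)/N) - v P| := by
          refine (abs_add_le _ _).trans ?_
          have := abs_add_le (v (P+1) - f (((P:ℝ)+1)/N)) (f (((P:ℝ)+1)/N) - f ((P:ℝ)/N))
          linarith
      _ ≤ ω + 2*η := by
          rw [abs_sub_comm (f ((P:ℝ)/N)) (v P)]
          linarith
  have hfP : |f y - f ((P:ℝ)/N)| ≤ ω := by
    refine hω _ _ hy hPmem ?_
    rw [abs_of_nonneg (by linarith)]
    have : ((P:ℝ)+1)/N - (P:ℝ)/N = 1/N := by field_simp; ring
    linarith
  have hvP : |v P - f ((P:ℝ)/N)| ≤ η := hv P (Nat.le_of_succ_le hPN)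
  have hθv : |((N:ℝ)*y - P) * (v (P+1) - v P)| ≤ ω + 2*η := by
    rw [abs_mul, abs_of_nonneg hθ0]
    nlinarith [abs_nonneg (v (P+1) - v P)]
  calc |f y - pwl N v y|
      = |(f y - f ((P:ℝ)/N)) + (f ((P:ℝ)/N) - v P) - ((N:ℝ)*y - P) * (v (P+1) - v P)| := by
        rw [haff]
        congr 1
        ring
    _ ≤ |f y - f ((P:ℝ)/N)| + |f ((P:ℝ)/N) - v P| + |((N:ℝ)*y - P) * (v (P+1) - v P)| := by
        refine (abs_sub _ _).trans ?_
        have := abs_add_le (f y - f ((P:ℝ)/N)) (f ((P:ℝ)/N) - v P)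
        linarith
    _ ≤ 2*ω + 3*η := by
        rw [abs_sub_comm (f ((P:ℝ)/N)) (v P)]
        linarith


lemma pwl_at_zero (N : ℕ) (hN : 1 ≤ N) (v : ℕ → ℝ) : pwl N v 0 = v 0 := by
  have h := pwl_eq_affine N hN v (y := 0) le_rfl zero_le_one
  have hpc : pc N 0 = 0 := by
    unfold pc
    rw [zero_mul, Int.floor_zero]
    simp
  rw [h, hpc]
  push_cast
  ring


lemma pwl_member (l : ℕ → ℝ) (hl : IsProperLambdaSeq l) (N : ℕ) (v : ℕ → ℝ) :
    ContinuousOn (pwl N v) (Set.Icc 0 1) ∧ lamVar l (pwl N v) < ⊤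
      ∧ ContInLamVar l (pwl N v) := by
  obtain ⟨⟨hm, hp, _⟩, htop⟩ := hl
  set K : ℝ := (N:ℝ) * ∑ i ∈ Finset.range (N+1), |v i| with hK
  have hK0 : 0 ≤ K := by
    rw [hK]
    positivity
  have hg : ∀ x y, |pwl N v x - pwl N v y| ≤ K * |x - y| := pwl_lip N v
  refine ⟨(pwl_continuous N v).continuousOn, ?_, ?_⟩
  · exact lt_of_le_of_lt (lamVar_lip hm hp hK0 hg) ENNReal.ofReal_lt_top
  · have bound : ∀ M : ℕ, lamVar (fun n => l (n + M)) (pwl N v)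
        ≤ ENNReal.ofReal (K / l (0 + M)) := by
      intro M
      exact lamVar_lip (fun a b hab => hm (by omega)) (fun n => hp _) hK0 hg
    refine tendsto_of_tendsto_of_tendsto_of_le_of_le (g := fun _ => 0)
      tendsto_const_nhds ?_ (fun M => zero_le) bound
    have h2 : Tendsto (fun M : ℕ => K / l (0 + M)) atTop (𝓝 0) := by
      refine Tendsto.div_atTop tendsto_const_nhds ?_
      have : (fun M : ℕ => l (0 + M)) = l := by
        funext M
        rw [Nat.zero_add]
      rw [this]
      exact htop
    have := ENNReal.tendsto_ofReal h2
    simpa using this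

lemma cast_mul_ofReal (k : ℕ) {r : ℝ} (hr : 0 ≤ r) :
    (k : ℝ≥0∞) * ENNReal.ofReal r = ENNReal.ofReal (k * r) := by
  rw [← ENNReal.ofReal_natCast k, ← ENNReal.ofReal_mul (Nat.cast_nonneg k)]


/-- For every proper Λ-sequence `Λ`, the space `CΛBV_c` is separable in the
`‖·‖_Λ` norm. -/
theorem cLamBVc_separable (l : ℕ → ℝ) (hl : IsProperLambdaSeq l) :
    ∃ D : Set (ℝ → ℝ), D.Countable ∧
      (∀ g ∈ D, ContinuousOn g (Set.Icc 0 1) ∧ lamVar l g < ⊤ ∧ ContInLamVar l g) ∧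
      ∀ f : ℝ → ℝ, ContinuousOn f (Set.Icc 0 1) → lamVar l f < ⊤ → ContInLamVar l f →
        ∀ ε : ℝ, 0 < ε → ∃ g ∈ D,
          lamNorm l (fun x => f x - g x) < ENNReal.ofReal ε := by
  classical
  obtain ⟨⟨hm, hp, hns⟩, htop⟩ := hl
  refine ⟨Set.range (fun p : (Σ n : ℕ, (Fin (n+2) → ℚ)) =>
    pwl (p.1+1) (fun i => if h : i ≤ p.1+1 then ((p.2 ⟨i, by omega⟩ : ℚ) : ℝ) else 0)),
    Set.countable_range _, ?_, ?_⟩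
  · rintro g ⟨p, rfl⟩
    exact pwl_member l ⟨⟨hm, hp, hns⟩, htop⟩ _ _
  · intro f hfc hfv hcv ε hε
    set ε10 := ε/10 with hε10
    have hε10pos : 0 < ε10 := by positivity
    -- choose M
    have h1 := ENNReal.tendsto_nhds_zero.1 hcv (ENNReal.ofReal ε10)
      (ENNReal.ofReal_pos.2 hε10pos)
    obtain ⟨M, hM⟩ := h1.exists
    -- uniform continuity
    have huc := isCompact_Icc.uniformContinuousOn_of_continuous hfc
    rw [Metric.uniformContinuousOn_iff] at huc
    have hl0 := hp 0
    have hlM := hp M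
    set ω := ε10 * l 0 / (20 * ((M:ℝ)+1)) with hω
    have hωpos : 0 < ω := by positivity
    obtain ⟨δ, hδpos, hδ⟩ := huc ω hωpos
    obtain ⟨n, hn⟩ := exists_nat_one_div_lt hδpos
    set N := n + 1 with hNdef
    have hN1 : 1 ≤ N := by omega
    have hNR : (0:ℝ) < (N:ℝ) := by exact_mod_cast hN1
    have hωmod : ∀ u u', u ∈ Set.Icc (0:ℝ) 1 → u' ∈ Set.Icc (0:ℝ) 1 →
        |u - u'| ≤ 1/N → |f u - f u'| ≤ ω := by
      intro u u' hu hu' hd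
      have hdd : dist u u' < δ := by
        rw [Real.dist_eq]
        have : (1:ℝ)/N = 1/((n:ℝ)+1) := by rw [hNdef]; push_cast; ring
        calc |u - u'| ≤ 1/N := hd
          _ = 1/((n:ℝ)+1) := this
          _ < δ := hn
      exact le_of_lt (hδ u hu u' hu' hdd)
    set η := min ω (min ε10 (ε10 * l M / (8 * ((N:ℝ)+1)))) with hη
    have hηpos : 0 < η := by
      refine lt_min hωpos (lt_min hε10pos ?_)
      positivity
    have hηω : η ≤ ω := min_le_left _ _
    have hηε : η ≤ ε10 := le_trans (min_le_right _ _) (min_le_left _ _)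
    have hηM : η ≤ ε10 * l M / (8 * ((N:ℝ)+1)) :=
      le_trans (min_le_right _ _) (min_le_right _ _)
    -- rational approximations at the nodes
    have hratex : ∀ i : ℕ, ∃ q : ℚ, |(q:ℝ) - f (i / N)| < η := by
      intro i
      obtain ⟨q, hq⟩ := exists_rat_near (f ((i:ℝ) / N)) hηpos
      exact ⟨q, by rwa [abs_sub_comm]⟩
    choose w0 hw0 using hratex
    set v : ℕ → ℝ := fun i => if h : i ≤ n + 1 then ((w0 i : ℚ) : ℝ) else 0 with hv
    have hvap : ∀ i, i ≤ N → |v i - f (i/N)| ≤ η := by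
      intro i hi
      rw [hv]
      simp only [dif_pos (show i ≤ n + 1 from hi)]
      exact le_of_lt (hw0 i)
    refine ⟨pwl N v, ⟨⟨n, fun j => w0 j.val⟩, rfl⟩, ?_⟩
    -- sup bound
    have hsup : ∀ y ∈ Set.Icc (0:ℝ) 1, |f y - pwl N v y| ≤ 2*ω + 3*η :=
      pwl_close f hN1 v hηpos.le hωmod hvap
    have hsplit := split_bound hm hp f (pwl N v) M hsup
    have hmM : Monotone (fun k => l (k + M)) := fun a b hab => hm (by omega)
    have hpM : ∀ k, 0 < l (k + M) := fun k => hp _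
    have hP2 := P2 hmM hpM f hN1 v hηpos.le hvap
    -- numeric pieces
    have e1 : (M : ℝ≥0∞) * ENNReal.ofReal (2 * (2*ω + 3*η) / l 0)
        = ENNReal.ofReal ((M:ℝ) * (2 * (2*ω + 3*η) / l 0)) :=
      cast_mul_ofReal M (by positivity)
    have e2 : (4 : ℝ≥0∞) * (N : ℝ≥0∞) * ENNReal.ofReal (2 * η / l (0 + M))
        = ENNReal.ofReal (4 * (N:ℝ) * (2 * η / l M)) := by
      have h0M : (0:ℕ) + M = M := Nat.zero_add M
      rw [h0M]
      rw [show (4 : ℝ≥0∞) * (N : ℝ≥0∞) = (((4 * N : ℕ) : ℕ) : ℝ≥0∞) by push_cast; ring]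
      rw [cast_mul_ofReal (4*N) (by positivity)]
      congr 1
      push_cast
      ring
    have e3 : (4 : ℝ≥0∞) * ENNReal.ofReal ε10 = ENNReal.ofReal (4 * ε10) := by
      rw [ENNReal.ofReal_mul (by norm_num)]
      congr 1
      norm_num
    -- assemble
    have hbound2 : lamVar (fun k => l (k + M)) (pwl N v)
        ≤ ENNReal.ofReal (4 * ε10) + ENNReal.ofReal (4 * (N:ℝ) * (2 * η / l M)) := by
      refine hP2.trans ?_
      refine add_le_add ?_ (le_of_eq e2)
      rw [← e3]
      exact mul_le_mul_right hM 4
    have hbz : |f 0 - pwl N v 0| ≤ η := by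
      rw [pwl_at_zero N hN1 v]
      have := hvap 0 (by omega)
      rw [abs_sub_comm]
      have h00 : ((0:ℕ):ℝ)/(N:ℝ) = 0 := by norm_num
      rwa [h00] at this
    calc lamNorm l (fun x => f x - pwl N v x)
        = lamVar l (fun x => f x - pwl N v x)
          + ENNReal.ofReal |f 0 - pwl N v 0| := rfl
      _ ≤ ((M : ℝ≥0∞) * ENNReal.ofReal (2 * (2*ω + 3*η) / l 0)
            + lamVar (fun k => l (k + M)) f + lamVar (fun k => l (k + M)) (pwl N v))
          + ENNReal.ofReal |f 0 - pwl N v 0| := add_le_add_left hsplit _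
      _ ≤ (ENNReal.ofReal ((M:ℝ) * (2 * (2*ω + 3*η) / l 0)) + ENNReal.ofReal ε10
            + (ENNReal.ofReal (4 * ε10) + ENNReal.ofReal (4 * (N:ℝ) * (2 * η / l M))))
          + ENNReal.ofReal η := by
          refine add_le_add (add_le_add (add_le_add (le_of_eq e1) hM) hbound2) ?_
          exact ENNReal.ofReal_le_ofReal hbz
      _ = ENNReal.ofReal ((M:ℝ) * (2 * (2*ω + 3*η) / l 0) + ε10
            + (4 * ε10 + 4 * (N:ℝ) * (2 * η / l M)) + η) := by
          rw [← ENNReal.ofReal_add (by positivity) (by positivity),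
            ← ENNReal.ofReal_add (by positivity) (by positivity),
            ← ENNReal.ofReal_add (by positivity) (by positivity),
            ← ENNReal.ofReal_add (by positivity) (by positivity)]
      _ < ENNReal.ofReal ε := by
          rw [ENNReal.ofReal_lt_ofReal_iff hε]
          -- real arithmetic
          have hA1 : (M:ℝ) * (2 * (2*ω + 3*η) / l 0) ≤ ε10 := by
            have hηω' : 2 * (2*ω + 3*η) ≤ 10 * ω := by linarith
            have s2 : (M:ℝ) * (2 * (2*ω + 3*η) / l 0) ≤ (M:ℝ) * (10 * ω / l 0) := by
              refine mul_le_mul_of_nonneg_left ?_ (Nat.cast_nonneg M)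
              exact div_le_div₀ (by positivity) hηω' hl0 le_rfl
            have s3 : (M:ℝ) * (10 * ω / l 0) = ε10 * M / (2*((M:ℝ)+1)) := by
              rw [hω]
              field_simp
              ring
            have s4 : ε10 * M / (2*((M:ℝ)+1)) ≤ ε10 := by
              rw [div_le_iff₀ (by positivity)]
              nlinarith [Nat.cast_nonneg (α := ℝ) M]
            linarith
          have hA4 : 4 * (N:ℝ) * (2 * η / l M) ≤ ε10 := by
            have s1 : 4 * (N:ℝ) * (2 * η / l M) = 8*(N:ℝ)*η/l M := by ring
            have s2 : 8*(N:ℝ)*η/l M ≤ 8*(N:ℝ)*(ε10 * l M / (8 * ((N:ℝ)+1)))/l M := by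
              refine div_le_div₀ (by positivity) ?_ hlM le_rfl
              have : (0:ℝ) ≤ 8*(N:ℝ) := by positivity
              nlinarith [hηM]
            have s3 : 8*(N:ℝ)*(ε10 * l M / (8 * ((N:ℝ)+1)))/l M = ε10 * N / ((N:ℝ)+1) := by
              field_simp
            have s4 : ε10 * N / ((N:ℝ)+1) ≤ ε10 := by
              rw [div_le_iff₀ (by positivity)]
              nlinarith
            linarith
          have : ε10 * 10 = ε := by rw [hε10]; ring
          linarith
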